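/- For all integers n ≥ 2 and k ≥ 0, and for every finitely supported function m from the positive integers to the nonnegative integers with Σ_j m(j) = n, the number of words w = w_1 w_2 … w_n over the positive integers in which each letter j occurs exactly m(j) times, whose descent set DES(w) = {i ∈ {1,…,n−1} : w_i > w_{i+1}} contains no two consecutive integers, has exactly k elements, and does not contain 1 (i.e., w has no double descents, k descents, and w_1 ≤ w_2) equals the number of such words in which instead DES(w) does not contain n−1 (i.e., w has no double descents, k descents, and w_{n−1} ≤ w_n). -/
import Mathlib


open Finset

/-- `S` contains no two consecutive integers. -/
def NoTwoConsec (S : Finset ℕ) : Prop := ∀ i ∈ S, i + 1 ∉ S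

/-- The letter `w_i` (positions numbered `1, …, n`) of a word encoded as a
function `Fin n → ℕ`; out-of-range positions read as `0`. -/
def wval {n : ℕ} (w : Fin n → ℕ) (i : ℕ) : ℕ :=
  if h : 1 ≤ i ∧ i ≤ n then w ⟨i - 1, by omega⟩ else 0

/-- The descent set `DES(w) = {i ∈ {1,…,n-1} : w_i > w_{i+1}}` of a word. -/
def wDES {n : ℕ} (w : Fin n → ℕ) : Finset ℕ :=
  (Finset.Icc 1 (n - 1)).filter fun i => wval w (i + 1) < wval w i

namespace WNFL

attribute [local instance] Classical.propDecidable

noncomputable section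

/-- The reflection `t ↦ n - t` of a cut set. -/
def rv (n : ℕ) (T : Finset ℕ) : Finset ℕ := T.image fun t => n - t

/-- Admissible cut sets: subsets of `[1, n-1]`. -/
def adm (n : ℕ) (T : Finset ℕ) : Prop := ∀ t ∈ T, 1 ≤ t ∧ t ≤ n - 1

lemma adm_subset {n : ℕ} {S T : Finset ℕ} (h : T ⊆ S) (hS : adm n S) : adm n T :=
  fun t ht => hS t (h ht)

lemma adm_iff {n : ℕ} {T : Finset ℕ} : adm n T ↔ T ⊆ Finset.Icc 1 (n - 1) := by
  constructor
  · intro h t ht; exact Finset.mem_Icc.2 (h t ht)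
  · intro h t ht; exact Finset.mem_Icc.1 (h ht)

lemma adm_rv {n : ℕ} {T : Finset ℕ} (hT : adm n T) : adm n (rv n T) := by
  intro x hx
  obtain ⟨t, ht, rfl⟩ := Finset.mem_image.1 hx
  have := hT t ht
  omega

lemma rv_rv {n : ℕ} {T : Finset ℕ} (hT : adm n T) : rv n (rv n T) = T := by
  ext x
  simp only [rv, Finset.mem_image]
  constructor
  · rintro ⟨y, ⟨t, ht, rfl⟩, rfl⟩
    have := hT t ht
    have : n - (n - t) = t := by omega
    rwa [this]
  · intro hx
    exact ⟨n - x, ⟨x, hx, rfl⟩, by have := hT x hx; omega⟩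

/-- The largest cut `≤ p` (or `0`). -/
def Asup (T : Finset ℕ) (p : ℕ) : ℕ := (T.filter fun t => t ≤ p).sup id

/-- `n` minus the smallest cut `> p` (or `0` if none). -/
def Ssup (n : ℕ) (T : Finset ℕ) (p : ℕ) : ℕ := (T.filter fun t => p < t).sup fun t => n - t

/-- The block-reversing permutation of positions. -/
def sig (n : ℕ) (T : Finset ℕ) (p : ℕ) : ℕ := Ssup n T p + (p - Asup T p)

lemma Asup_le (T : Finset ℕ) (p : ℕ) : Asup T p ≤ p :=
  Finset.sup_le fun t ht => (Finset.mem_filter.1 ht).2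

lemma le_Asup {T : Finset ℕ} {t p : ℕ} (ht : t ∈ T) (h : t ≤ p) : t ≤ Asup T p :=
  Finset.le_sup (f := id) (Finset.mem_filter.2 ⟨ht, h⟩)

lemma Asup_cases (T : Finset ℕ) (p : ℕ) : Asup T p = 0 ∨ Asup T p ∈ T := by
  rcases (T.filter fun t => t ≤ p).eq_empty_or_nonempty with h | h
  · left; simp [Asup, h]
  · right
    obtain ⟨t, ht, hts⟩ := Finset.exists_mem_eq_sup _ h id
    rw [Asup, hts]
    exact (Finset.mem_filter.1 ht).1

lemma Ssup_le (n : ℕ) {T : Finset ℕ} {p : ℕ} (hp : p < n) : Ssup n T p ≤ n - p - 1 :=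
  Finset.sup_le fun t ht => by
    have := (Finset.mem_filter.1 ht).2; omega

lemma le_Ssup (n : ℕ) {T : Finset ℕ} {t p : ℕ} (ht : t ∈ T) (h : p < t) :
    n - t ≤ Ssup n T p :=
  Finset.le_sup (f := fun t => n - t) (Finset.mem_filter.2 ⟨ht, h⟩)

lemma Ssup_cases (n : ℕ) (T : Finset ℕ) (p : ℕ) :
    Ssup n T p = 0 ∨ ∃ t ∈ T, p < t ∧ Ssup n T p = n - t := by
  rcases (T.filter fun t => p < t).eq_empty_or_nonempty with h | h
  · left; simp [Ssup, h]
  · right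
    obtain ⟨t, ht, hts⟩ := Finset.exists_mem_eq_sup _ h (fun t => n - t)
    rw [Finset.mem_filter] at ht
    exact ⟨t, ht.1, ht.2, hts⟩

lemma sig_lt (n : ℕ) (T : Finset ℕ) (p : ℕ) (hp : p < n) : sig n T p < n - Asup T p := by
  have h1 := Ssup_le n (T := T) hp
  have h2 := Asup_le T p
  unfold sig
  omega

lemma sig_lt_n (n : ℕ) (T : Finset ℕ) (p : ℕ) (hp : p < n) : sig n T p < n := by
  have := sig_lt n T p hp
  omega

lemma sig_succ (n : ℕ) {T : Finset ℕ} {p : ℕ} (h : p + 1 ∉ T) :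
    sig n T (p + 1) = sig n T p + 1 := by
  have hA : T.filter (fun t => t ≤ p + 1) = T.filter (fun t => t ≤ p) := by
    ext t
    simp only [Finset.mem_filter]
    constructor
    · rintro ⟨ht, h'⟩
      have : t ≠ p + 1 := fun e => h (e ▸ ht)
      exact ⟨ht, by omega⟩
    · rintro ⟨ht, h'⟩; exact ⟨ht, by omega⟩
  have hS : T.filter (fun t => p + 1 < t) = T.filter (fun t => p < t) := by
    ext t
    simp only [Finset.mem_filter]
    constructor
    · rintro ⟨ht, h'⟩; exact ⟨ht, by omega⟩
    · rintro ⟨ht, h'⟩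
      have : t ≠ p + 1 := fun e => h (e ▸ ht)
      exact ⟨ht, by omega⟩
  have h1 : Asup T (p + 1) = Asup T p := by unfold Asup; rw [hA]
  have h2 : Ssup n T (p + 1) = Ssup n T p := by unfold Ssup; rw [hS]
  have h3 := Asup_le T p
  unfold sig
  rw [h1, h2]
  omega

lemma sig_rv_sig (n : ℕ) {T : Finset ℕ} {p : ℕ} (hT : adm n T) (hp : p < n) :
    sig n (rv n T) (sig n T p) = p := by
  have hAp := Asup_le T p
  have hs1n := Ssup_le n (T := T) hp
  have hqA := sig_lt n T p hp
  have hq : sig n T p = Ssup n T p + (p - Asup T p) := rfl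
  have ha : Asup (rv n T) (sig n T p) = Ssup n T p := by
    apply le_antisymm
    · apply Finset.sup_le
      intro x hx
      rw [Finset.mem_filter] at hx
      obtain ⟨hx1, hx2⟩ := hx
      obtain ⟨t, ht, rfl⟩ := Finset.mem_image.1 hx1
      have htb := hT t ht
      by_cases hc : t ≤ p
      · exfalso
        have h1 : t ≤ Asup T p := le_Asup ht hc
        omega
      · exact le_Ssup n ht (by omega : p < t)
    · rcases Ssup_cases n T p with h0 | ⟨t, ht, htp, hts⟩
      · omega
      · have hmem : n - t ∈ rv n T := Finset.mem_image.2 ⟨t, ht, rfl⟩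
        have := le_Asup hmem (by omega : n - t ≤ sig n T p)
        omega
  have hb : Ssup n (rv n T) (sig n T p) = Asup T p := by
    apply le_antisymm
    · apply Finset.sup_le
      intro x hx
      rw [Finset.mem_filter] at hx
      obtain ⟨hx1, hx2⟩ := hx
      obtain ⟨t, ht, rfl⟩ := Finset.mem_image.1 hx1
      have htb := hT t ht
      have hnt : n - (n - t) = t := by omega
      rw [hnt]
      by_cases hc : t ≤ p
      · exact le_Asup ht hc
      · exfalso
        have := le_Ssup n ht (by omega : p < t)
        omega
    · rcases Asup_cases T p with h0 | hmem
      · omega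
      · have hAb := hT _ hmem
        have hx : n - Asup T p ∈ rv n T := Finset.mem_image.2 ⟨Asup T p, hmem, rfl⟩
        have h2 := le_Ssup n hx (by omega : sig n T p < n - Asup T p)
        have h3 : n - (n - Asup T p) = Asup T p := by omega
        omega
  show Ssup n (rv n T) (sig n T p) + (sig n T p - Asup (rv n T) (sig n T p)) = p
  rw [ha, hb]
  omega

lemma sig_succ_notMem (n : ℕ) {T : Finset ℕ} {p : ℕ} (hT : adm n T) (hp : p + 1 < n)
    (hmem : p + 1 ∉ rv n T) : sig n (rv n T) p + 1 ∉ T := by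
  have hstep : sig n (rv n T) (p + 1) = sig n (rv n T) p + 1 := sig_succ n hmem
  have hlt : sig n (rv n T) (p + 1) < n - Asup (rv n T) (p + 1) := sig_lt n _ _ hp
  have hub := Asup_le (rv n T) (p + 1)
  intro hsT
  have hsb := hT _ hsT
  have hx : n - (sig n (rv n T) p + 1) ∈ rv n T :=
    Finset.mem_image.2 ⟨sig n (rv n T) p + 1, hsT, rfl⟩
  by_cases hc : n - (sig n (rv n T) p + 1) ≤ p + 1
  · have h1 := le_Asup hx hc
    omega
  · have h2 := le_Ssup n hx (by omega : p + 1 < n - (sig n (rv n T) p + 1))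
    have hs1 : n - (n - (sig n (rv n T) p + 1)) = sig n (rv n T) p + 1 := by omega
    rw [hs1] at h2
    have hdef : sig n (rv n T) (p + 1)
        = Ssup n (rv n T) (p + 1) + (p + 1 - Asup (rv n T) (p + 1)) := rfl
    rw [hstep] at hdef
    have hap : Asup (rv n T) (p + 1) = p + 1 := by omega
    rcases Asup_cases (rv n T) (p + 1) with h0 | hmem'
    · omega
    · rw [hap] at hmem'
      exact hmem hmem'

/-- The position permutation as a map `Fin n → Fin n`. -/
def sigFun (n : ℕ) (T : Finset ℕ) : Fin n → Fin n :=
  fun q => ⟨sig n T q.1, sig_lt_n n T q.1 q.2⟩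

lemma sigFun_inv (n : ℕ) {T : Finset ℕ} (hT : adm n T) (q : Fin n) :
    sigFun n (rv n T) (sigFun n T q) = q :=
  Fin.ext (sig_rv_sig n hT q.2)

lemma sigFun_inv' (n : ℕ) {T : Finset ℕ} (hT : adm n T) (q : Fin n) :
    sigFun n T (sigFun n (rv n T) q) = q := by
  have h := sigFun_inv n (adm_rv hT) q
  rwa [rv_rv hT] at h

/-- The block-reversing map on words. -/
def Phi (n : ℕ) (T : Finset ℕ) (w : Fin n → ℕ) : Fin n → ℕ :=
  fun q => w (sigFun n (rv n T) q)

lemma Phi_Phi (n : ℕ) {T : Finset ℕ} (hT : adm n T) (w : Fin n → ℕ) :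
    Phi n (rv n T) (Phi n T w) = w := by
  funext q
  show (Phi n T w) (sigFun n (rv n (rv n T)) q) = w q
  rw [rv_rv hT]
  show w (sigFun n (rv n T) (sigFun n T q)) = w q
  rw [sigFun_inv n hT]

lemma Phi_card (n : ℕ) {T : Finset ℕ} (hT : adm n T) (w : Fin n → ℕ) (j : ℕ) :
    (Finset.univ.filter fun i => Phi n T w i = j).card
      = (Finset.univ.filter fun i => w i = j).card := by
  apply Finset.card_bij' (fun i _ => sigFun n (rv n T) i) (fun i _ => sigFun n T i)
  · intro a ha
    rw [Finset.mem_filter] at ha ⊢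
    exact ⟨Finset.mem_univ _, ha.2⟩
  · intro a ha
    rw [Finset.mem_filter] at ha ⊢
    refine ⟨Finset.mem_univ _, ?_⟩
    show w (sigFun n (rv n T) (sigFun n T a)) = j
    rw [sigFun_inv n hT]
    exact ha.2
  · intro a _
    exact sigFun_inv' n hT a
  · intro a _
    exact sigFun_inv n hT a

lemma wval_eq {n : ℕ} (w : Fin n → ℕ) (i : ℕ) (h1 : 1 ≤ i) (h2 : i ≤ n) :
    wval w i = w ⟨i - 1, by omega⟩ := dif_pos ⟨h1, h2⟩

lemma Phi_wval (n : ℕ) (T : Finset ℕ) (w : Fin n → ℕ) (i : ℕ) (h1 : 1 ≤ i) (h2 : i ≤ n) :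
    wval (Phi n T w) i = wval w (sig n (rv n T) (i - 1) + 1) := by
  have hs := sig_lt_n n (rv n T) (i - 1) (by omega)
  rw [wval_eq _ i h1 h2, wval_eq _ _ (by omega) (by omega)]
  show w (sigFun n (rv n T) ⟨i - 1, _⟩) = _
  exact congrArg w (Fin.ext (by simp [sigFun]))

lemma Phi_DES (n : ℕ) {T : Finset ℕ} (hT : adm n T) {w : Fin n → ℕ}
    (hw : wDES w ⊆ T) : wDES (Phi n T w) ⊆ rv n T := by
  intro i hi
  by_contra hiT
  rw [wDES, Finset.mem_filter, Finset.mem_Icc] at hi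
  obtain ⟨⟨h1, h2⟩, hdes⟩ := hi
  obtain ⟨p, rfl⟩ : ∃ p, i = p + 1 := ⟨i - 1, by omega⟩
  have hpn : p + 1 < n := by omega
  have hstep : sig n (rv n T) (p + 1) = sig n (rv n T) p + 1 := sig_succ n hiT
  have hnot : sig n (rv n T) p + 1 ∉ T := sig_succ_notMem n hT hpn hiT
  have hslt : sig n (rv n T) p + 1 < n := by
    have := sig_lt_n n (rv n T) (p + 1) hpn
    omega
  rw [Phi_wval n T w (p + 1) (by omega) (by omega),
      Phi_wval n T w (p + 1 + 1) (by omega) (by omega)] at hdes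
  simp only [Nat.add_sub_cancel] at hdes
  rw [hstep] at hdes
  have hmem : sig n (rv n T) p + 1 ∈ wDES w := by
    rw [wDES, Finset.mem_filter, Finset.mem_Icc]
    exact ⟨⟨by omega, by omega⟩, hdes⟩
  exact hnot (hw hmem)

/-! ### Counting -/

/-- The base condition: positive letters with content `m`. -/
def WBase (n : ℕ) (m : ℕ →₀ ℕ) (w : Fin n → ℕ) : Prop :=
  (∀ i, 1 ≤ w i) ∧ ∀ j, (Finset.univ.filter fun i => w i = j).card = m j

/-- A finite superset of all words with content `m`. -/
def Omega (n : ℕ) (m : ℕ →₀ ℕ) : Finset (Fin n → ℕ) :=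
  Fintype.piFinset fun _ => Finset.Icc 1 (m.support.sup id)

lemma WBase_mem_Omega {n : ℕ} {m : ℕ →₀ ℕ} {w : Fin n → ℕ} (hw : WBase n m w) :
    w ∈ Omega n m := by
  rw [Omega, Fintype.mem_piFinset]
  intro i
  rw [Finset.mem_Icc]
  refine ⟨hw.1 i, ?_⟩
  have h := hw.2 (w i)
  have hmem : i ∈ Finset.univ.filter fun i' => w i' = w i :=
    Finset.mem_filter.2 ⟨Finset.mem_univ _, rfl⟩
  have hcard : 0 < m (w i) := h ▸ Finset.card_pos.2 ⟨i, hmem⟩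
  exact Finset.le_sup (f := id) (Finsupp.mem_support_iff.2 (by omega))

lemma Phi_mem_Omega {n : ℕ} {m : ℕ →₀ ℕ} {T : Finset ℕ} {w : Fin n → ℕ}
    (hw : w ∈ Omega n m) : Phi n T w ∈ Omega n m := by
  rw [Omega, Fintype.mem_piFinset] at hw ⊢
  intro i
  exact hw _

lemma Phi_WBase {n : ℕ} {m : ℕ →₀ ℕ} {T : Finset ℕ} (hT : adm n T) {w : Fin n → ℕ}
    (hw : WBase n m w) : WBase n m (Phi n T w) :=
  ⟨fun q => hw.1 _, fun j => (Phi_card n hT w j).trans (hw.2 j)⟩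

/-- The number of words with content `m` and descent set exactly `S`. -/
def beta (n : ℕ) (m : ℕ →₀ ℕ) (S : Finset ℕ) : ℕ :=
  ((Omega n m).filter fun w => WBase n m w ∧ wDES w = S).card

lemma alpha_symm (n : ℕ) (m : ℕ →₀ ℕ) {T : Finset ℕ} (hT : adm n T) :
    ((Omega n m).filter fun w => WBase n m w ∧ wDES w ⊆ T).card
      = ((Omega n m).filter fun w => WBase n m w ∧ wDES w ⊆ rv n T).card := by
  apply Finset.card_bij' (fun w _ => Phi n T w) (fun w _ => Phi n (rv n T) w)
  · intro w hw
    rw [Finset.mem_filter] at hw ⊢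
    exact ⟨Phi_mem_Omega hw.1, Phi_WBase hT hw.2.1, Phi_DES n hT hw.2.2⟩
  · intro w hw
    rw [Finset.mem_filter] at hw ⊢
    refine ⟨Phi_mem_Omega hw.1, Phi_WBase (adm_rv hT) hw.2.1, ?_⟩
    have := Phi_DES n (adm_rv hT) hw.2.2
    rwa [rv_rv hT] at this
  · intro w _
    exact Phi_Phi n hT w
  · intro w _
    have := Phi_Phi n (adm_rv hT) w
    rwa [rv_rv hT] at this

lemma alpha_eq_sum (n : ℕ) (m : ℕ →₀ ℕ) (S : Finset ℕ) :
    ((Omega n m).filter fun w => WBase n m w ∧ wDES w ⊆ S).card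
      = ∑ T ∈ S.powerset, beta n m T := by
  rw [Finset.card_eq_sum_card_fiberwise
      (f := fun w => wDES w) (t := S.powerset)
      (fun w hw => Finset.mem_powerset.2 (Finset.mem_filter.1 hw).2.2)]
  apply Finset.sum_congr rfl
  intro T hT
  rw [Finset.filter_filter, beta]
  congr 1
  apply Finset.filter_congr
  intro w _
  constructor
  · rintro ⟨⟨h1, _⟩, h3⟩; exact ⟨h1, h3⟩
  · rintro ⟨h1, h3⟩
    exact ⟨⟨h1, h3 ▸ Finset.mem_powerset.1 hT⟩, h3⟩

lemma powerset_rv (n : ℕ) {S : Finset ℕ} (hS : adm n S) :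
    (rv n S).powerset = S.powerset.image (rv n) := by
  ext T
  simp only [Finset.mem_powerset, Finset.mem_image]
  constructor
  · intro h
    refine ⟨rv n T, ?_, ?_⟩
    · have : rv n T ⊆ rv n (rv n S) := Finset.image_subset_image h
      rwa [rv_rv hS] at this
    · exact rv_rv (adm_subset h (adm_rv hS))
  · rintro ⟨U, hU, rfl⟩
    exact Finset.image_subset_image hU

lemma beta_symm (n : ℕ) (m : ℕ →₀ ℕ) (S : Finset ℕ) (hS : adm n S) :
    beta n m S = beta n m (rv n S) := by
  induction S using Finset.strongInduction with
  | _ S ih =>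
    have key := alpha_symm n m hS
    rw [alpha_eq_sum, alpha_eq_sum, powerset_rv n hS,
        Finset.sum_image ?inj] at key
    case inj =>
      intro T1 h1 T2 h2 he
      have e1 := rv_rv (adm_subset (Finset.mem_powerset.1 h1) hS)
      have e2 := rv_rv (adm_subset (Finset.mem_powerset.1 h2) hS)
      rw [← e1, ← e2, he]
    have hSsf : S ∈ S.powerset := Finset.mem_powerset_self S
    rw [← Finset.add_sum_erase _ _ hSsf, ← Finset.add_sum_erase _ _ hSsf] at key
    have hsum : ∑ T ∈ S.powerset.erase S, beta n m T
        = ∑ T ∈ S.powerset.erase S, beta n m (rv n T) := by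
      apply Finset.sum_congr rfl
      intro T hT'
      have hT'' := Finset.mem_erase.1 hT'
      have hsub : T ⊆ S := Finset.mem_powerset.1 hT''.2
      exact ih T (Finset.ssubset_iff_subset_ne.2 ⟨hsub, hT''.1⟩) (adm_subset hsub hS)
    rw [hsum] at key
    omega

lemma ntc_rv (n : ℕ) {S : Finset ℕ} (hS : adm n S) (h : NoTwoConsec S) :
    NoTwoConsec (rv n S) := by
  intro i hi hi1
  obtain ⟨t, ht, rfl⟩ := Finset.mem_image.1 hi
  obtain ⟨t', ht', he⟩ := Finset.mem_image.1 hi1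
  have hb := hS t ht
  have hb' := hS t' ht'
  have he2 : n - t' = n - t + 1 := he
  have : t' + 1 = t := by omega
  exact h t' ht' (this ▸ ht)

lemma card_rv (n : ℕ) {S : Finset ℕ} (hS : adm n S) : (rv n S).card = S.card := by
  rw [rv, Finset.card_image_of_injOn]
  intro a ha b hb he
  have he2 : n - a = n - b := he
  have := hS a ha
  have := hS b hb
  omega

lemma wDES_subset {n : ℕ} (w : Fin n → ℕ) : wDES w ⊆ Finset.Icc 1 (n - 1) :=
  Finset.filter_subset _ _

theorem main (n k : ℕ) (hn : 2 ≤ n) (m : ℕ →₀ ℕ) :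
    {w : Fin n → ℕ |
        (∀ i, 1 ≤ w i) ∧
        (∀ j, (Finset.univ.filter fun i => w i = j).card = m j) ∧
        NoTwoConsec (wDES w) ∧ (wDES w).card = k ∧ 1 ∉ wDES w}.ncard =
    {w : Fin n → ℕ |
        (∀ i, 1 ≤ w i) ∧
        (∀ j, (Finset.univ.filter fun i => w i = j).card = m j) ∧
        NoTwoConsec (wDES w) ∧ (wDES w).card = k ∧ n - 1 ∉ wDES w}.ncard := by
  classical
  have hL : {w : Fin n → ℕ |
        (∀ i, 1 ≤ w i) ∧
        (∀ j, (Finset.univ.filter fun i => w i = j).card = m j) ∧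
        NoTwoConsec (wDES w) ∧ (wDES w).card = k ∧ 1 ∉ wDES w}
      = ↑((Omega n m).filter fun w =>
          WBase n m w ∧ NoTwoConsec (wDES w) ∧ (wDES w).card = k ∧ 1 ∉ wDES w) := by
    ext w
    simp only [Set.mem_setOf_eq, Finset.coe_filter, Set.mem_setOf_eq]
    constructor
    · rintro ⟨h1, h2, h3, h4, h5⟩
      exact ⟨WBase_mem_Omega ⟨h1, h2⟩, ⟨h1, h2⟩, h3, h4, h5⟩
    · rintro ⟨_, ⟨h1, h2⟩, h3, h4, h5⟩
      exact ⟨h1, h2, h3, h4, h5⟩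
  have hR : {w : Fin n → ℕ |
        (∀ i, 1 ≤ w i) ∧
        (∀ j, (Finset.univ.filter fun i => w i = j).card = m j) ∧
        NoTwoConsec (wDES w) ∧ (wDES w).card = k ∧ n - 1 ∉ wDES w}
      = ↑((Omega n m).filter fun w =>
          WBase n m w ∧ NoTwoConsec (wDES w) ∧ (wDES w).card = k ∧ n - 1 ∉ wDES w) := by
    ext w
    simp only [Set.mem_setOf_eq, Finset.coe_filter, Set.mem_setOf_eq]
    constructor
    · rintro ⟨h1, h2, h3, h4, h5⟩
      exact ⟨WBase_mem_Omega ⟨h1, h2⟩, ⟨h1, h2⟩, h3, h4, h5⟩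
    · rintro ⟨_, ⟨h1, h2⟩, h3, h4, h5⟩
      exact ⟨h1, h2, h3, h4, h5⟩
  rw [hL, hR, Set.ncard_coe_finset, Set.ncard_coe_finset]
  have hLsum : ((Omega n m).filter fun w =>
        WBase n m w ∧ NoTwoConsec (wDES w) ∧ (wDES w).card = k ∧ 1 ∉ wDES w).card
      = ∑ S ∈ ((Finset.Icc 1 (n - 1)).powerset).filter
          (fun S => NoTwoConsec S ∧ S.card = k ∧ 1 ∉ S), beta n m S := by
    rw [Finset.card_eq_sum_card_fiberwise (f := fun w => wDES w)
        (t := ((Finset.Icc 1 (n - 1)).powerset).filter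
          (fun S => NoTwoConsec S ∧ S.card = k ∧ 1 ∉ S))
        (fun w hw => by
          have h := (Finset.mem_filter.1 hw).2
          exact Finset.mem_filter.2
            ⟨Finset.mem_powerset.2 (wDES_subset w), h.2.1, h.2.2.1, h.2.2.2⟩)]
    apply Finset.sum_congr rfl
    intro S hS
    have hSp := Finset.mem_filter.1 hS
    rw [Finset.filter_filter, beta]
    congr 1
    apply Finset.filter_congr
    intro w _
    constructor
    · rintro ⟨⟨h1, _⟩, h2⟩; exact ⟨h1, h2⟩
    · rintro ⟨h1, h2⟩
      exact ⟨⟨h1, h2 ▸ hSp.2.1, h2 ▸ hSp.2.2.1, h2 ▸ hSp.2.2.2⟩, h2⟩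
  have hRsum : ((Omega n m).filter fun w =>
        WBase n m w ∧ NoTwoConsec (wDES w) ∧ (wDES w).card = k ∧ n - 1 ∉ wDES w).card
      = ∑ S ∈ ((Finset.Icc 1 (n - 1)).powerset).filter
          (fun S => NoTwoConsec S ∧ S.card = k ∧ n - 1 ∉ S), beta n m S := by
    rw [Finset.card_eq_sum_card_fiberwise (f := fun w => wDES w)
        (t := ((Finset.Icc 1 (n - 1)).powerset).filter
          (fun S => NoTwoConsec S ∧ S.card = k ∧ n - 1 ∉ S))
        (fun w hw => by
          have h := (Finset.mem_filter.1 hw).2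
          exact Finset.mem_filter.2
            ⟨Finset.mem_powerset.2 (wDES_subset w), h.2.1, h.2.2.1, h.2.2.2⟩)]
    apply Finset.sum_congr rfl
    intro S hS
    have hSp := Finset.mem_filter.1 hS
    rw [Finset.filter_filter, beta]
    congr 1
    apply Finset.filter_congr
    intro w _
    constructor
    · rintro ⟨⟨h1, _⟩, h2⟩; exact ⟨h1, h2⟩
    · rintro ⟨h1, h2⟩
      exact ⟨⟨h1, h2 ▸ hSp.2.1, h2 ▸ hSp.2.2.1, h2 ▸ hSp.2.2.2⟩, h2⟩
  rw [hLsum, hRsum]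
  apply Finset.sum_nbij' (i := fun S => rv n S) (j := fun S => rv n S)
  · intro S hS
    have hSp := Finset.mem_filter.1 hS
    have hadm : adm n S := adm_iff.2 (Finset.mem_powerset.1 hSp.1)
    refine Finset.mem_filter.2 ⟨Finset.mem_powerset.2 (adm_iff.1 (adm_rv hadm)),
      ntc_rv n hadm hSp.2.1, (card_rv n hadm).trans hSp.2.2.1, ?_⟩
    intro hmem
    obtain ⟨t, ht, he⟩ := Finset.mem_image.1 hmem
    have := hadm t ht
    have : t = 1 := by omega
    exact hSp.2.2.2 (this ▸ ht)
  · intro S hS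
    have hSp := Finset.mem_filter.1 hS
    have hadm : adm n S := adm_iff.2 (Finset.mem_powerset.1 hSp.1)
    refine Finset.mem_filter.2 ⟨Finset.mem_powerset.2 (adm_iff.1 (adm_rv hadm)),
      ntc_rv n hadm hSp.2.1, (card_rv n hadm).trans hSp.2.2.1, ?_⟩
    intro hmem
    obtain ⟨t, ht, he⟩ := Finset.mem_image.1 hmem
    have := hadm t ht
    have : t = n - 1 := by omega
    exact hSp.2.2.2 (this ▸ ht)
  · intro S hS
    have hSp := Finset.mem_filter.1 hS
    exact rv_rv (adm_iff.2 (Finset.mem_powerset.1 hSp.1))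
  · intro S hS
    have hSp := Finset.mem_filter.1 hS
    exact rv_rv (adm_iff.2 (Finset.mem_powerset.1 hSp.1))
  · intro S hS
    have hSp := Finset.mem_filter.1 hS
    exact beta_symm n m S (adm_iff.2 (Finset.mem_powerset.1 hSp.1))

end

end WNFL

/-- For `n ≥ 2`, `k ≥ 0`, and a finitely supported content function `m` on the
positive integers with `Σ_j m(j) = n`: the number of words `w = w₁ … w_n` over
the positive integers with content `m`, no two consecutive descents, exactly `k`
descents and `1 ∉ DES(w)` equals the number of such words with instead
`n - 1 ∉ DES(w)`. -/
theorem words_noFirst_eq_noLast (n k : ℕ) (hn : 2 ≤ n) (m : ℕ →₀ ℕ)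
    (hm0 : m 0 = 0) (hsum : (m.sum fun _ c => c) = n) :
    {w : Fin n → ℕ |
        (∀ i, 1 ≤ w i) ∧
        (∀ j, (Finset.univ.filter fun i => w i = j).card = m j) ∧
        NoTwoConsec (wDES w) ∧ (wDES w).card = k ∧ 1 ∉ wDES w}.ncard =
    {w : Fin n → ℕ |
        (∀ i, 1 ≤ w i) ∧
        (∀ j, (Finset.univ.filter fun i => w i = j).card = m j) ∧
        NoTwoConsec (wDES w) ∧ (wDES w).card = k ∧ n - 1 ∉ wDES w}.ncard :=
  WNFL.main n k hn m
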